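/- Let Q ∈ ℝ^{l×n}, P ∈ ℝ^{n×T}, R ∈ ℝ^{l×T}, and suppose the affine set Σ = {A ∈ ℝ^{n×n} : R = Q A P} is nonempty. Let v ∈ ℝ^T and λ ∈ ℝ be such that R v = λ Q P v and x₀ := P v ≠ 0. Then there exists A* ∈ Σ with A* x₀ = λ x₀. -/
import Mathlib

open Matrix

lemma mul_vecMulVec_aux {l n T : ℕ} (Q : Matrix (Fin l) (Fin n) ℝ)
    (w : Fin n → ℝ) (x : Fin n → ℝ) (P : Matrix (Fin n) (Fin T) ℝ) :
    Q * vecMulVec w x * P = vecMulVec (Q.mulVec w) (P.vecMul x) := by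
  ext i j
  simp [mul_apply, vecMulVec_apply, mulVec, vecMul, dotProduct, Finset.sum_mul,
    Finset.mul_sum, mul_assoc]

lemma vecMulVec_mulVec_aux {n : ℕ} (w x y : Fin n → ℝ) :
    (vecMulVec w x).mulVec y = (x ⬝ᵥ y) • w := by
  ext i
  simp [mulVec, vecMulVec_apply, dotProduct, Finset.mul_sum, mul_comm, mul_left_comm]

theorem stmt_9 {l n T : ℕ} (Q : Matrix (Fin l) (Fin n) ℝ) (P : Matrix (Fin n) (Fin T) ℝ)
    (R : Matrix (Fin l) (Fin T) ℝ) (hne : ∃ A : Matrix (Fin n) (Fin n) ℝ, R = Q * A * P)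
    (v : Fin T → ℝ) (lam : ℝ)
    (hv : R.mulVec v = lam • Q.mulVec (P.mulVec v))
    (hx0 : P.mulVec v ≠ 0) :
    ∃ Astar : Matrix (Fin n) (Fin n) ℝ, R = Q * Astar * P ∧
      Astar.mulVec (P.mulVec v) = lam • P.mulVec v := by
  obtain ⟨A₀, hA₀⟩ := hne
  set x := P.mulVec v with hx
  set w : Fin n → ℝ := lam • x - A₀.mulVec x with hw
  have hxx : x ⬝ᵥ x ≠ 0 := fun h => hx0 (dotProduct_self_eq_zero.mp h)
  have hQw : Q.mulVec w = 0 := by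
    have h1 : Q.mulVec (A₀.mulVec x) = R.mulVec v := by
      simp [hA₀, hx, mulVec_mulVec, Matrix.mul_assoc]
    have h2 : Q.mulVec (lam • x) = R.mulVec v := by
      rw [mulVec_smul, hx, hv]
    rw [hw, mulVec_sub, h1, h2, sub_self]
  refine ⟨A₀ + (x ⬝ᵥ x)⁻¹ • vecMulVec w x, ?_, ?_⟩
  · rw [Matrix.mul_add, Matrix.add_mul, Matrix.mul_smul, Matrix.smul_mul, mul_vecMulVec_aux]
    have : vecMulVec (Q.mulVec w) (P.vecMul x) = 0 := by
      rw [hQw]; ext i j; simp [vecMulVec_apply]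
    rw [this, smul_zero, add_zero, hA₀]
  · rw [add_mulVec, smul_mulVec, vecMulVec_mulVec_aux, smul_smul,
      inv_mul_cancel₀ hxx, one_smul, hw]
    abel
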